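/- Let λ : ℝ → ℝ be a nonnegative measurable function that is integrable on every bounded interval [0, t], and define Λ(t) = ∫_0^t λ(s) ds for t ≥ 0. Let τ be a nonnegative random variable on a probability space (Ω, P) whose survival function satisfies P(τ > t) = exp(−Λ(t)) for all t ≥ 0. Then the rescaled random variable z = Λ(τ) = ∫_0^τ λ(s) ds is exponentially distributed with rate parameter 1 on its range; that is, P(Λ(τ) > x) = exp(−x) for every x ≥ 0 with x in the closure of the range of Λ. -/

import Mathlib

open MeasureTheory

/-- Time-Rescaling (first arrival case): if `τ ≥ 0` has survival function
`P(τ > t) = exp(-Λ t)` for `t ≥ 0`, where `Λ t = ∫_0^t λ(s) ds` is the compensator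
of a nonnegative, locally integrable intensity `λ`, then `z = Λ(τ)` is a unit-rate
exponential random variable on its range: `P(Λ(τ) > x) = exp(-x)` for every
`x ≥ 0` lying in the closure of the range of `Λ` on `[0, ∞)`. -/
theorem time_rescaling_first_arrival {Ω : Type*} [MeasurableSpace Ω]
    (P : Measure Ω) [IsProbabilityMeasure P]
    (lam : ℝ → ℝ) (hlam_meas : Measurable lam) (hlam_nonneg : ∀ s, 0 ≤ lam s)
    (hlam_int : ∀ t : ℝ, 0 ≤ t → IntegrableOn lam (Set.Icc 0 t) volume)
    (Λ : ℝ → ℝ) (hΛ : ∀ t : ℝ, Λ t = ∫ s in (0 : ℝ)..t, lam s)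
    (τ : Ω → ℝ) (hτ_meas : Measurable τ) (hτ_nonneg : ∀ ω, 0 ≤ τ ω)
    (hsurv : ∀ t : ℝ, 0 ≤ t →
      P {ω | t < τ ω} = ENNReal.ofReal (Real.exp (-Λ t))) :
    ∀ x : ℝ, 0 ≤ x → x ∈ closure (Λ '' Set.Ici 0) →
      P {ω | x < Λ (τ ω)} = ENNReal.ofReal (Real.exp (-x)) := by
  intro x hx _
  -- Λ is monotone on [0,∞)
  have hmono : ∀ a b : ℝ, 0 ≤ a → a ≤ b → Λ a ≤ Λ b := by
    intro a b ha hab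
    rw [hΛ a, hΛ b]
    have hIa : IntervalIntegrable lam volume 0 a :=
      (intervalIntegrable_iff_integrableOn_Icc_of_le ha).2 (hlam_int a ha)
    have hIb : IntervalIntegrable lam volume 0 b :=
      (intervalIntegrable_iff_integrableOn_Icc_of_le (ha.trans hab)).2
        (hlam_int b (ha.trans hab))
    have hIab : IntervalIntegrable lam volume a b :=
      (intervalIntegrable_iff_integrableOn_Icc_of_le hab).2
        ((hlam_int b (ha.trans hab)).mono_set (Set.Icc_subset_Icc_left ha))
    have := intervalIntegral.integral_add_adjacent_intervals hIa hIab
    rw [← this]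
    have : 0 ≤ ∫ s in a..b, lam s :=
      intervalIntegral.integral_nonneg hab (fun u _ => hlam_nonneg u)
    linarith
  have hΛ0 : Λ 0 = 0 := by rw [hΛ]; simp
  -- the set S
  set S : Set ℝ := {t : ℝ | 0 ≤ t ∧ Λ t ≤ x} with hS
  have h0S : (0 : ℝ) ∈ S := ⟨le_refl 0, by rw [hΛ0]; exact hx⟩
  by_cases hbdd : BddAbove S
  · -- t1 = sup S
    set t1 := sSup S with ht1def
    have ht1_mem_le : ∀ t ∈ S, t ≤ t1 := fun t ht => le_csSup hbdd ht
    have ht1_nonneg : 0 ≤ t1 := ht1_mem_le 0 h0S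
    -- continuity of Λ on [0, t1 + 1]
    have hcont : ContinuousOn Λ (Set.Icc 0 (t1 + 1)) := by
      have := intervalIntegral.continuousOn_primitive (μ := volume) (f := lam) (a := 0)
        (b := t1 + 1) (hlam_int (t1 + 1) (by linarith))
      have heq : ∀ y ∈ Set.Icc (0:ℝ) (t1+1), (∫ t in Set.Ioc 0 y, lam t) = Λ y := by
        intro y hy
        rw [hΛ y, intervalIntegral.integral_of_le hy.1]
      exact (continuousOn_congr heq).1 this
    have hconti : ContinuousWithinAt Λ (Set.Icc 0 (t1+1)) t1 :=
      hcont t1 ⟨ht1_nonneg, by linarith⟩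
    -- Λ t1 ≤ x : approach sup from the left within S
    have hΛt1_le : Λ t1 ≤ x := by
      -- choose u n ∈ S with t1 - 1/(n+1) < u n
      have hchoice : ∀ n : ℕ, ∃ u ∈ S, t1 - 1/((n:ℝ)+1) < u := by
        intro n
        have hpos : (0:ℝ) < 1/((n:ℝ)+1) := by positivity
        exact exists_lt_of_lt_csSup ⟨0, h0S⟩ (by linarith)
      choose u hu hul using hchoice
      have huc : ∀ n, u n ≤ t1 := fun n => ht1_mem_le _ (hu n)
      have hu_tend : Filter.Tendsto u Filter.atTop (nhds t1) := by
        have h1 : Filter.Tendsto (fun n : ℕ => t1 - 1/((n:ℝ)+1)) Filter.atTop (nhds t1) := by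
          have := tendsto_one_div_add_atTop_nhds_zero_nat (𝕜 := ℝ)
          have := (tendsto_const_nhds (x := t1) (f := Filter.atTop (α := ℕ))).sub this
          simpa using this
        exact tendsto_of_tendsto_of_tendsto_of_le_of_le h1 tendsto_const_nhds
          (fun n => (hul n).le) huc
      have hu_tendW : Filter.Tendsto u Filter.atTop (nhdsWithin t1 (Set.Icc 0 (t1+1))) := by
        rw [tendsto_nhdsWithin_iff]
        exact ⟨hu_tend, Filter.Eventually.of_forall fun n => ⟨(hu n).1, by linarith [huc n]⟩⟩
      have := hconti.tendsto.comp hu_tendW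
      exact le_of_tendsto this (Filter.Eventually.of_forall fun n => (hu n).2)
    -- x ≤ Λ t1 : approach from the right
    have hΛt1_ge : x ≤ Λ t1 := by
      have hnot : ∀ n : ℕ, x < Λ (t1 + 1/((n:ℝ)+1)) := by
        intro n
        have hpos : (0:ℝ) < 1/((n:ℝ)+1) := by positivity
        have hnotS : t1 + 1/((n:ℝ)+1) ∉ S := fun hmem =>
          absurd (ht1_mem_le _ hmem) (by linarith)
        have : ¬ (Λ (t1 + 1/((n:ℝ)+1)) ≤ x) := fun h => hnotS ⟨by linarith, h⟩
        linarith [not_le.1 this]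
      have h1 : Filter.Tendsto (fun n : ℕ => t1 + 1/((n:ℝ)+1)) Filter.atTop (nhds t1) := by
        have := tendsto_one_div_add_atTop_nhds_zero_nat (𝕜 := ℝ)
        have := (tendsto_const_nhds (x := t1) (f := Filter.atTop (α := ℕ))).add this
        simpa using this
      have hW : Filter.Tendsto (fun n : ℕ => t1 + 1/((n:ℝ)+1)) Filter.atTop
          (nhdsWithin t1 (Set.Icc 0 (t1+1))) := by
        rw [tendsto_nhdsWithin_iff]
        refine ⟨h1, Filter.Eventually.of_forall fun n => ?_⟩
        have hpos : (0:ℝ) < 1/((n:ℝ)+1) := by positivity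
        have hle : 1/((n:ℝ)+1) ≤ 1 := by
          rw [div_le_one (by positivity)]; linarith [Nat.cast_nonneg (α := ℝ) n]
        exact ⟨by linarith, by linarith⟩
      have := hconti.tendsto.comp hW
      exact ge_of_tendsto this (Filter.Eventually.of_forall fun n => (hnot n).le)
    have hΛt1 : Λ t1 = x := le_antisymm hΛt1_le hΛt1_ge
    -- event equality
    have hset : {ω | x < Λ (τ ω)} = {ω | t1 < τ ω} := by
      ext ω
      simp only [Set.mem_setOf_eq]
      constructor
      · intro h
        by_contra hc
        push_neg at hc
        have := hmono (τ ω) t1 (hτ_nonneg ω) hc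
        linarith
      · intro h
        have hnotS : τ ω ∉ S := fun hmem => absurd (ht1_mem_le _ hmem) (not_le.2 h)
        have : ¬ (Λ (τ ω) ≤ x) := fun hle => hnotS ⟨hτ_nonneg ω, hle⟩
        linarith [not_le.1 this]
      
    rw [hset, hsurv t1 ht1_nonneg, hΛt1]
  · -- S unbounded: contradiction
    exfalso
    have hall : ∀ n : ℕ, Λ (n : ℝ) ≤ x := by
      intro n
      rcases not_bddAbove_iff.1 hbdd (n : ℝ) with ⟨t, htS, hnt⟩
      exact le_trans (hmono _ t (Nat.cast_nonneg n) hnt.le) htS.2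
    have hmeas : ∀ n : ℕ, NullMeasurableSet {ω | (n:ℝ) < τ ω} P :=
      fun n => (measurableSet_lt measurable_const hτ_meas).nullMeasurableSet
    have hanti : Antitone (fun n : ℕ => {ω | (n:ℝ) < τ ω}) := by
      intro m n hmn ω hω
      simp only [Set.mem_setOf_eq] at hω ⊢
      exact lt_of_le_of_lt (by exact_mod_cast hmn) hω
    have htend := tendsto_measure_iInter_atTop (μ := P) hmeas hanti
      ⟨0, by simp [measure_ne_top]⟩
    have hempty : (⋂ n : ℕ, {ω | (n:ℝ) < τ ω}) = ∅ := by
      ext ω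
      simp only [Set.mem_iInter, Set.mem_setOf_eq, Set.mem_empty_iff_false, iff_false, not_forall,
        not_lt]
      rcases exists_nat_ge (τ ω) with ⟨n, hn⟩
      exact ⟨n, hn⟩
    rw [hempty] at htend
    simp only [measure_empty] at htend
    have hge : ∀ n : ℕ, ENNReal.ofReal (Real.exp (-x)) ≤ P {ω | (n:ℝ) < τ ω} := by
      intro n
      rw [hsurv n (Nat.cast_nonneg n)]
      exact ENNReal.ofReal_le_ofReal (Real.exp_le_exp.2 (by linarith [hall n]))
    have := le_of_tendsto_of_tendsto' tendsto_const_nhds htend hge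
    simp [ENNReal.ofReal_eq_zero, Real.exp_pos] at this
    linarith [Real.exp_pos (-x), this]
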